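/- For Hermitian n×n matrices A and B, the decreasingly sorted eigenvalue vector of A+B is majorized by the sum of the decreasingly sorted eigenvalue vectors of A and of B, i.e. λ(A+B) ≺ λ(A)+λ(B). -/

import Mathlib

/-- Partial sum of the first `m` entries of a vector in `ℝ^n`. -/
def pSum {n : ℕ} (x : Fin n → ℝ) (m : ℕ) : ℝ :=
  ∑ i : Fin n, if (i : ℕ) < m then x i else 0

/-- Majorization for (decreasingly sorted) vectors. -/
def Maj {n : ℕ} (x y : Fin n → ℝ) : Prop :=
  (∀ m : ℕ, pSum x m ≤ pSum y m) ∧ (∑ i, x i) = (∑ i, y i)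

/-- `μ` is the decreasingly sorted eigenvalue vector of a Hermitian matrix. -/
def IsSortedEig {n : ℕ} {A : Matrix (Fin n) (Fin n) ℂ} (hA : A.IsHermitian)
    (μ : Fin n → ℝ) : Prop :=
  Antitone μ ∧ ∃ σ : Equiv.Perm (Fin n), ∀ i, μ i = hA.eigenvalues (σ i)

open Matrix Finset in
/-- Combinatorial lemma: if `μ` is antitone, `0 ≤ c ≤ 1` and `∑ c` equals the number of
indices below `m`, then `∑ μ j * c j` is at most the sum of the first `m` entries of `μ`. -/
lemma comb_lemma {n m : ℕ} (μ c : Fin n → ℝ) (hμ : Antitone μ) (hc0 : ∀ j, 0 ≤ c j)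
    (hc1 : ∀ j, c j ≤ 1)
    (hsum : ∑ j, c j = ∑ j : Fin n, if (j : ℕ) < m then (1:ℝ) else 0) :
    ∑ j, μ j * c j ≤ ∑ j : Fin n, if (j : ℕ) < m then μ j else 0 := by
  rcases lt_or_ge m n with hm | hm
  · set t := μ ⟨m, hm⟩ with ht
    have key : ∑ j, (μ j - t) * (c j - if (j : ℕ) < m then 1 else 0) ≤ 0 := by
      apply Finset.sum_nonpos
      intro j _
      by_cases h : (j : ℕ) < m
      · have h1 : t ≤ μ j := hμ (by simpa [Fin.le_def] using h.le)
        simp only [h, if_true]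
        exact mul_nonpos_of_nonneg_of_nonpos (by linarith) (by linarith [hc1 j])
      · have h1 : μ j ≤ t := hμ (by simpa [Fin.le_def] using not_lt.mp h)
        simp only [h, if_false, sub_zero]
        exact mul_nonpos_of_nonpos_of_nonneg (by linarith) (hc0 j)
    have expand : ∑ j, (μ j - t) * (c j - if (j : ℕ) < m then 1 else 0)
        = (∑ j, μ j * c j) - (∑ j : Fin n, if (j : ℕ) < m then μ j else 0)
          - t * (∑ j, c j) + t * (∑ j : Fin n, if (j : ℕ) < m then (1:ℝ) else 0) := by
      rw [Finset.mul_sum, Finset.mul_sum, ← Finset.sum_sub_distrib, ← Finset.sum_sub_distrib,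
        ← Finset.sum_add_distrib]
      apply Finset.sum_congr rfl
      intro j _
      by_cases h : (j : ℕ) < m <;> simp [h] <;> ring
    rw [expand, hsum] at key
    linarith
  · have hall : ∀ j : Fin n, (j : ℕ) < m := fun j => lt_of_lt_of_le j.2 hm
    have hsum' : ∑ j, c j = (n : ℝ) := by
      rw [hsum]; simp [hall]
    have h1 : ∑ j : Fin n, (1 - c j) = 0 := by
      rw [Finset.sum_sub_distrib, hsum']; simp
    have hc : ∀ j : Fin n, c j = 1 := by
      intro j
      have := (Finset.sum_eq_zero_iff_of_nonneg
        (fun j _ => by linarith [hc1 j])).1 h1 j (Finset.mem_univ j)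
      linarith
    simp only [hall, if_true]
    apply le_of_eq
    exact Finset.sum_congr rfl fun j _ => by rw [hc j, mul_one]

open Matrix in
/-- An eigenvector equation in `EuclideanSpace`. -/
lemma toEuclideanLin_eigenvectorBasis {n : ℕ} {M : Matrix (Fin n) (Fin n) ℂ}
    (hM : M.IsHermitian) (j : Fin n) :
    Matrix.toEuclideanLin M (hM.eigenvectorBasis j)
      = (hM.eigenvalues j : ℂ) • hM.eigenvectorBasis j := by
  have h := hM.mulVec_eigenvectorBasis j
  apply (WithLp.equiv 2 (Fin n → ℂ)).injective
  rw [WithLp.equiv_apply, Matrix.ofLp_toEuclideanLin_apply]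
  change M *ᵥ (WithLp.equiv 2 (Fin n → ℂ)) (hM.eigenvectorBasis j) = (↑(hM.eigenvalues j) : ℂ) • (WithLp.equiv 2 (Fin n → ℂ)) (hM.eigenvectorBasis j)
  have : (WithLp.equiv 2 (Fin n → ℂ)) (hM.eigenvectorBasis j) = ⇑(hM.eigenvectorBasis j) := rfl
  rw [this, h, RCLike.real_smul_eq_coe_smul (K := ℂ)]
  norm_cast

open Matrix RCLike in
/-- Expansion of the quadratic form of a Hermitian matrix in its eigenbasis. -/
lemma quad_expand {n : ℕ} {M : Matrix (Fin n) (Fin n) ℂ} (hM : M.IsHermitian)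
    (v : EuclideanSpace ℂ (Fin n)) :
    RCLike.re (inner ℂ v (Matrix.toEuclideanLin M v) : ℂ)
      = ∑ j, hM.eigenvalues j * ‖(inner ℂ (hM.eigenvectorBasis j) v : ℂ)‖ ^ 2 := by
  set u := hM.eigenvectorBasis with hu
  have hv : v = ∑ j, (inner ℂ (u j) v : ℂ) • u j := (u.sum_repr' v).symm
  have hTv : Matrix.toEuclideanLin M v
      = ∑ j, (inner ℂ (u j) v : ℂ) • ((hM.eigenvalues j : ℂ) • u j) := by
    conv_lhs => rw [hv]
    rw [map_sum]
    exact Finset.sum_congr rfl fun j _ => by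
      rw [_root_.map_smul, toEuclideanLin_eigenvectorBasis hM j]
  have : (inner ℂ v (Matrix.toEuclideanLin M v) : ℂ)
      = ∑ j, (hM.eigenvalues j : ℂ) * ((inner ℂ (u j) v : ℂ) * (starRingEnd ℂ) (inner ℂ (u j) v)) := by
    rw [hTv, inner_sum]
    exact Finset.sum_congr rfl fun j _ => by
      rw [inner_smul_right, inner_smul_right, ← inner_conj_symm v (u j)]
      ring
  rw [this, map_sum]
  apply Finset.sum_congr rfl
  intro j _
  rw [RCLike.mul_conj, ← RCLike.ofReal_pow, RCLike.re_to_complex]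
  simp [RCLike.ofReal_alg]
  left
  norm_cast

open Matrix in
/-- Parseval: for an orthonormal basis `w` and a unit vector `x`,
the squared inner products sum to `1`. -/
lemma parseval_one {n : ℕ} (w : OrthonormalBasis (Fin n) ℂ (EuclideanSpace ℂ (Fin n)))
    (x : EuclideanSpace ℂ (Fin n)) (hx : ‖x‖ = 1) :
    ∑ i, ‖(inner ℂ x (w i) : ℂ)‖ ^ 2 = 1 := by
  have h := w.sum_inner_mul_inner x x
  have h2 : ∀ i, (inner ℂ x (w i) : ℂ) * (inner ℂ (w i) x : ℂ)
      = ((‖(inner ℂ x (w i) : ℂ)‖ : ℂ)) ^ 2 := by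
    intro i
    rw [← inner_conj_symm (w i) x, RCLike.mul_conj]
    norm_cast
  simp_rw [h2] at h
  have h3 : (inner ℂ x x : ℂ) = 1 := by
    rw [inner_self_eq_norm_sq_to_K, hx]; norm_num
  rw [h3] at h
  exact_mod_cast h

open Matrix in
/-- Ky Fan type bound: partial sums of quadratic forms over an orthonormal basis are
bounded by the partial sums of the sorted eigenvalues. -/
lemma core_bound {n m : ℕ} {M : Matrix (Fin n) (Fin n) ℂ} (hM : M.IsHermitian)
    (μ : Fin n → ℝ) (hμ : IsSortedEig hM μ)
    (w : OrthonormalBasis (Fin n) ℂ (EuclideanSpace ℂ (Fin n))) :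
    ∑ i : Fin n, (if (i : ℕ) < m
        then RCLike.re (inner ℂ (w i) (Matrix.toEuclideanLin M (w i)) : ℂ) else 0)
      ≤ pSum μ m := by
  obtain ⟨hanti, σ, hσ⟩ := hμ
  set u := hM.eigenvectorBasis with hu
  have hnorm : ∀ i j : Fin n, ‖(inner ℂ (u j) (w i) : ℂ)‖ = ‖(inner ℂ (w i) (u j) : ℂ)‖ :=
    fun i j => norm_inner_symm _ _
  set d : Fin n → ℝ := fun j => ∑ i : Fin n,
    (if (i : ℕ) < m then ‖(inner ℂ (u j) (w i) : ℂ)‖ ^ 2 else 0) with hd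
  have hLHS : ∑ i : Fin n, (if (i : ℕ) < m
      then RCLike.re (inner ℂ (w i) (Matrix.toEuclideanLin M (w i)) : ℂ) else 0)
      = ∑ j, hM.eigenvalues j * d j := by
    have : ∀ i : Fin n, (if (i : ℕ) < m
        then RCLike.re (inner ℂ (w i) (Matrix.toEuclideanLin M (w i)) : ℂ) else 0)
        = ∑ j, hM.eigenvalues j *
            (if (i : ℕ) < m then ‖(inner ℂ (u j) (w i) : ℂ)‖ ^ 2 else 0) := by
      intro i
      by_cases h : (i : ℕ) < m
      · simp only [h, if_true]
        exact quad_expand hM (w i)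
      · simp [h]
    rw [Finset.sum_congr rfl fun i _ => this i, Finset.sum_comm]
    exact Finset.sum_congr rfl fun j _ => by rw [hd, Finset.mul_sum]
  have hunorm : ∀ j, ‖u j‖ = 1 := fun j => u.orthonormal.1 j
  have hd0 : ∀ j, 0 ≤ d j := fun j =>
    Finset.sum_nonneg fun i _ => by positivity
  have hd1 : ∀ j, d j ≤ 1 := by
    intro j
    calc d j ≤ ∑ i : Fin n, ‖(inner ℂ (u j) (w i) : ℂ)‖ ^ 2 := by
          apply Finset.sum_le_sum
          intro i _
          by_cases h : (i : ℕ) < m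
          · simp [h]
          · simp only [h, if_false]
            positivity
      _ = 1 := parseval_one w (u j) (hunorm j)
  have hdsum : ∑ j, d j = ∑ j : Fin n, if (j : ℕ) < m then (1:ℝ) else 0 := by
    rw [hd, Finset.sum_comm]
    apply Finset.sum_congr rfl
    intro i _
    by_cases h : (i : ℕ) < m
    · simp only [h, if_true]
      have : ∀ j, ‖(inner ℂ (u j) (w i) : ℂ)‖ ^ 2 = ‖(inner ℂ (w i) (u j) : ℂ)‖ ^ 2 := by
        intro j; rw [hnorm]
      rw [Finset.sum_congr rfl fun j _ => this j]
      exact parseval_one u (w i) (w.orthonormal.1 i)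
    · simp [h]
  rw [hLHS]
  have hre : ∑ j, hM.eigenvalues j * d j = ∑ k, μ k * d (σ k) := by
    rw [← Equiv.sum_comp σ (fun j => hM.eigenvalues j * d j)]
    exact Finset.sum_congr rfl fun k _ => by rw [hσ]
  rw [hre]
  apply comb_lemma μ (fun k => d (σ k)) hanti (fun k => hd0 _) (fun k => hd1 _)
  rw [Equiv.sum_comp σ d, hdsum]

open Matrix in
/-- The full sum of quadratic forms over any orthonormal basis equals the sum of eigenvalues. -/
lemma sum_all {n : ℕ} {M : Matrix (Fin n) (Fin n) ℂ} (hM : M.IsHermitian)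
    (w : OrthonormalBasis (Fin n) ℂ (EuclideanSpace ℂ (Fin n))) :
    ∑ i : Fin n, RCLike.re (inner ℂ (w i) (Matrix.toEuclideanLin M (w i)) : ℂ)
      = ∑ j, hM.eigenvalues j := by
  have : ∑ i : Fin n, RCLike.re (inner ℂ (w i) (Matrix.toEuclideanLin M (w i)) : ℂ)
      = ∑ j, hM.eigenvalues j * ∑ i, ‖(inner ℂ (hM.eigenvectorBasis j) (w i) : ℂ)‖ ^ 2 := by
    rw [Finset.sum_congr rfl fun i _ => quad_expand hM (w i), Finset.sum_comm]
    exact Finset.sum_congr rfl fun j _ => by rw [Finset.mul_sum]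
  rw [this]
  apply Finset.sum_congr rfl
  intro j _
  rw [parseval_one w _ (hM.eigenvectorBasis.orthonormal.1 j), mul_one]

open Matrix in
/-- For Hermitian matrices A, B: λ(A+B) ≺ λ(A) + λ(B) (decreasingly sorted). -/
theorem eigenvalues_add_majorization {n : ℕ} (A B : Matrix (Fin n) (Fin n) ℂ)
    (hA : A.IsHermitian) (hB : B.IsHermitian) (hAB : (A + B).IsHermitian)
    (μAB μA μB : Fin n → ℝ)
    (hμAB : IsSortedEig hAB μAB) (hμA : IsSortedEig hA μA) (hμB : IsSortedEig hB μB) :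
    Maj μAB (fun i => μA i + μB i) := by
  obtain ⟨hanti, σ, hσ⟩ := hμAB
  set w : OrthonormalBasis (Fin n) ℂ (EuclideanSpace ℂ (Fin n)) :=
    hAB.eigenvectorBasis.reindex σ.symm with hw
  have hwapp : ∀ i, w i = hAB.eigenvectorBasis (σ i) := by
    intro i
    rw [hw, OrthonormalBasis.reindex_apply, Equiv.symm_symm]
  have hkey : ∀ i, RCLike.re (inner ℂ (w i) (Matrix.toEuclideanLin (A + B) (w i)) : ℂ) = μAB i := by
    intro i
    rw [hwapp i, toEuclideanLin_eigenvectorBasis hAB (σ i), inner_smul_right,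
      inner_self_eq_norm_sq_to_K, hAB.eigenvectorBasis.orthonormal.1 (σ i)]
    simp [hσ i]
  have hsplit : ∀ v : EuclideanSpace ℂ (Fin n),
      Matrix.toEuclideanLin (A + B) v = Matrix.toEuclideanLin A v + Matrix.toEuclideanLin B v := by
    intro v
    rw [map_add]
    rfl
  have hterm : ∀ i, μAB i
      = RCLike.re (inner ℂ (w i) (Matrix.toEuclideanLin A (w i)) : ℂ)
        + RCLike.re (inner ℂ (w i) (Matrix.toEuclideanLin B (w i)) : ℂ) := by
    intro i
    rw [← hkey i, hsplit, inner_add_right, map_add]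
  constructor
  · intro m
    have hABle := core_bound hA μA hμA w (m := m)
    have hBle := core_bound hB μB hμB w (m := m)
    have hL : pSum μAB m
        = (∑ i : Fin n, (if (i : ℕ) < m
            then RCLike.re (inner ℂ (w i) (Matrix.toEuclideanLin A (w i)) : ℂ) else 0))
          + (∑ i : Fin n, (if (i : ℕ) < m
            then RCLike.re (inner ℂ (w i) (Matrix.toEuclideanLin B (w i)) : ℂ) else 0)) := by
      rw [pSum, ← Finset.sum_add_distrib]
      apply Finset.sum_congr rfl
      intro i _
      by_cases h : (i : ℕ) < m
      · simp only [h, if_true]; exact hterm i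
      · simp [h]
    have hR : pSum (fun i => μA i + μB i) m = pSum μA m + pSum μB m := by
      rw [pSum, pSum, pSum, ← Finset.sum_add_distrib]
      apply Finset.sum_congr rfl
      intro i _
      by_cases h : (i : ℕ) < m <;> simp [h]
    rw [hL, hR]
    exact add_le_add hABle hBle
  · have h1 : ∑ i, μAB i
        = (∑ i : Fin n, RCLike.re (inner ℂ (w i) (Matrix.toEuclideanLin A (w i)) : ℂ))
          + (∑ i : Fin n, RCLike.re (inner ℂ (w i) (Matrix.toEuclideanLin B (w i)) : ℂ)) := by
      rw [← Finset.sum_add_distrib]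
      exact Finset.sum_congr rfl fun i _ => hterm i
    obtain ⟨_, σA, hσA⟩ := hμA
    obtain ⟨_, σB, hσB⟩ := hμB
    have h2 : ∑ i, μA i = ∑ j, hA.eigenvalues j := by
      rw [← Equiv.sum_comp σA hA.eigenvalues]
      exact Finset.sum_congr rfl fun i _ => hσA i
    have h3 : ∑ i, μB i = ∑ j, hB.eigenvalues j := by
      rw [← Equiv.sum_comp σB hB.eigenvalues]
      exact Finset.sum_congr rfl fun i _ => hσB i
    rw [h1, sum_all hA w, sum_all hB w, Finset.sum_add_distrib]
    rw [h2, h3]
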